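/- Let G be a finite group, X a locally compact Hausdorff G-space, K ⊆ X a G-invariant compact subspace, and Z a discrete transitive G-set. If f : K → Z is a continuous G-equivariant map, then there exists a G-invariant open subspace U ⊇ K of X and a continuous G-equivariant map f̂ : U → Z extending f. -/

import Mathlib

/-- A continuous equivariant map from a `G`-invariant compact subset of a
locally compact Hausdorff `G`-space to a discrete orbit extends to a `G`-invariant open
neighbourhood. -/
theorem bredon_extend_orbit_map_from_compact
    {G X Z : Type*} [Group G] [Finite G]
    [TopologicalSpace X] [T2Space X] [LocallyCompactSpace X] [MulAction G X]
    (hact : ∀ g : G, Continuous fun x : X => g • x)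
    [TopologicalSpace Z] [DiscreteTopology Z] [MulAction G Z]
    [MulAction.IsPretransitive G Z]
    (K : Set X) (hK : IsCompact K)
    (hKinv : ∀ (g : G), ∀ x ∈ K, g • x ∈ K)
    (f : X → Z) (hf : ContinuousOn f K)
    (hfe : ∀ (γ : G), ∀ y ∈ K, f (γ • y) = γ • f y) :
    ∃ (U : Set X) (fhat : X → Z),
      IsOpen U ∧ (∀ (γ : G), ∀ y ∈ U, γ • y ∈ U) ∧ K ⊆ U ∧
      ContinuousOn fhat U ∧ (∀ (γ : G), ∀ y ∈ U, fhat (γ • y) = γ • fhat y) ∧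
      Set.EqOn fhat f K := by
  classical
  have hKcl : IsClosed K := hK.isClosed
  set S : Set Z := f '' K with hSdef
  have hS : S.Finite := (hK.image_of_continuousOn hf).finite_of_discrete
  set Kz : Z → Set X := fun z => K ∩ f ⁻¹' {z} with hKzdef
  have hKzK : ∀ z, Kz z ⊆ K := fun z => Set.inter_subset_left
  have hKzc : ∀ z, IsCompact (Kz z) :=
    fun z => hK.of_isClosed_subset
      (hf.preimage_isClosed_of_isClosed hKcl isClosed_singleton) Set.inter_subset_left
  have hsep : ∀ z w : Z, z ≠ w → ∃ A : Set X, ∃ B : Set X,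
      IsOpen A ∧ IsOpen B ∧ Kz z ⊆ A ∧ Kz w ⊆ B ∧ Disjoint A B := by
    intro z w hzw
    have hd : Disjoint (Kz z) (Kz w) := by
      rw [Set.disjoint_left]
      rintro x ⟨-, hx1⟩ ⟨-, hx2⟩
      exact hzw (by simp at hx1 hx2; rw [← hx1, ← hx2])
    obtain ⟨A, B, hA, hB, h1, h2, h3⟩ := SeparatedNhds.of_isCompact_isCompact (hKzc z) (hKzc w) hd
    exact ⟨A, B, hA, hB, h1, h2, h3⟩
  choose! A B hAo hBo hKA hKB hAB using hsep
  -- pairwise disjoint open neighbourhoods of the fibers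
  set W : Z → Set X := fun z => (⋂ w ∈ S \ {z}, A z w) ∩ (⋂ w ∈ S \ {z}, B w z) with hWdef
  have hWo : ∀ z, IsOpen (W z) := by
    intro z
    refine IsOpen.inter (Set.Finite.isOpen_biInter hS.diff ?_)
      (Set.Finite.isOpen_biInter hS.diff ?_)
    · rintro w ⟨-, hw⟩
      exact hAo z w fun h => hw (Set.mem_singleton_iff.mpr h.symm)
    · rintro w ⟨-, hw⟩
      exact hBo w z fun h => hw (Set.mem_singleton_iff.mpr h)
  have hKW : ∀ z, Kz z ⊆ W z := by
    intro z x hx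
    constructor
    · refine Set.mem_biInter fun w hw => hKA z w ?_ hx
      intro h; exact hw.2 (Set.mem_singleton_iff.mpr h.symm)
    · refine Set.mem_biInter fun w hw => hKB w z ?_ hx
      intro h; exact hw.2 (Set.mem_singleton_iff.mpr h)
  have hWdisj : ∀ z ∈ S, ∀ w ∈ S, z ≠ w → Disjoint (W z) (W w) := by
    intro z hz w hw hzw
    have h1 : W z ⊆ A z w := fun x hx =>
      Set.mem_iInter₂.mp hx.1 w ⟨hw, fun h => hzw (Set.mem_singleton_iff.mp h).symm⟩
    have h2 : W w ⊆ B z w := fun x hx =>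
      Set.mem_iInter₂.mp hx.2 z ⟨hz, fun h => hzw (Set.mem_singleton_iff.mp h)⟩
    exact ((hAB z w hzw).mono h1 h2)
  -- the locally constant extension
  set f₀ : X → Z := fun x => if h : ∃ z ∈ S, x ∈ W z then h.choose else f x with hf₀def
  have hf₀W : ∀ z ∈ S, ∀ x ∈ W z, f₀ x = z := by
    intro z hz x hx
    have h : ∃ z ∈ S, x ∈ W z := ⟨z, hz, hx⟩
    have := h.choose_spec
    simp only [hf₀def, dif_pos h]
    by_contra hne
    exact Set.disjoint_left.mp (hWdisj _ this.1 z hz hne) this.2 hx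
  have hf₀K : ∀ x ∈ K, f₀ x = f x := by
    intro x hx
    exact hf₀W (f x) ⟨x, hx, rfl⟩ x (hKW (f x) ⟨hx, rfl⟩)
  -- union of the W's
  set Wu : Set X := ⋃ z ∈ S, W z with hWudef
  have hWuo : IsOpen Wu := isOpen_biUnion fun z _ => hWo z
  have hKWu : K ⊆ Wu := fun x hx => Set.mem_biUnion ⟨x, hx, rfl⟩ (hKW (f x) ⟨hx, rfl⟩)
  have hcont : ContinuousOn f₀ Wu := by
    intro x hx
    obtain ⟨z, hz, hxz⟩ := Set.mem_iUnion₂.mp hx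
    have : ∀ y ∈ W z, f₀ y = z := hf₀W z hz
    refine ContinuousWithinAt.congr_of_eventuallyEq
      (continuousWithinAt_const (b := z)) ?_ (this x hxz)
    exact Filter.mem_of_superset (nhdsWithin_le_nhds ((hWo z).mem_nhds hxz))
      (fun y hy => this y hy)
  -- equivariant domain
  set E : G → Set X := fun g => (Wu ∩ (fun x => g • x) ⁻¹' Wu) ∩ {x | f₀ (g • x) = g • f₀ x}
    with hEdef
  have hEo : ∀ g, IsOpen (E g) := by
    intro g
    rw [isOpen_iff_forall_mem_open]
    rintro x ⟨⟨hx1, hx2⟩, hx3⟩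
    obtain ⟨z, hz, hxz⟩ := Set.mem_iUnion₂.mp hx1
    obtain ⟨w, hw, hxw⟩ := Set.mem_iUnion₂.mp hx2
    refine ⟨W z ∩ (fun x => g • x) ⁻¹' W w, ?_, ((hWo z).inter ((hWo w).preimage (hact g))),
      hxz, hxw⟩
    rintro y ⟨hy1, hy2⟩
    have hfy : f₀ y = z := hf₀W z hz y hy1
    have hfgy : f₀ (g • y) = w := hf₀W w hw (g • y) hy2
    have hfx : f₀ x = z := hf₀W z hz x hxz
    have hfgx : f₀ (g • x) = w := hf₀W w hw (g • x) hxw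
    refine ⟨⟨Set.mem_biUnion hz hy1, Set.mem_biUnion hw hy2⟩, ?_⟩
    show f₀ (g • y) = g • f₀ y
    rw [hfgy, hfy, ← hfx, ← hx3, hfgx]
  set U : Set X := ⋂ g : G, E g with hUdef
  have hUo : IsOpen U := isOpen_iInter_of_finite hEo
  have hUWu : U ⊆ Wu := fun x hx => ((Set.mem_iInter.mp hx 1).1).1
  have hUE : ∀ g, ∀ x ∈ U, f₀ (g • x) = g • f₀ x := fun g x hx => (Set.mem_iInter.mp hx g).2
  have hUgW : ∀ g, ∀ x ∈ U, g • x ∈ Wu := fun g x hx => (Set.mem_iInter.mp hx g).1.2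
  refine ⟨U, f₀, hUo, ?_, ?_, hcont.mono hUWu, fun γ y hy => hUE γ y hy, fun x hx => hf₀K x hx⟩
  · -- invariance
    intro γ y hy
    rw [Set.mem_iInter]
    intro h
    refine ⟨⟨hUgW γ y hy, ?_⟩, ?_⟩
    · show h • γ • y ∈ Wu
      rw [smul_smul]; exact hUgW (h * γ) y hy
    · show f₀ (h • γ • y) = h • f₀ (γ • y)
      rw [smul_smul, hUE (h * γ) y hy, hUE γ y hy, mul_smul]
  · -- K ⊆ U
    intro x hx
    rw [Set.mem_iInter]
    intro g
    refine ⟨⟨hKWu hx, hKWu (hKinv g x hx)⟩, ?_⟩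
    show f₀ (g • x) = g • f₀ x
    rw [hf₀K _ (hKinv g x hx), hf₀K x hx, hfe g x hx]
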